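/- Let X be the set of natural numbers equipped with the cofinite topology. Then: (1) every infinite cardinal is a precaliber, a precaliber*, a weak precaliber, and a weak precaliber* for X; (2) an infinite cardinal λ is a caliber* for X if and only if λ > ω; (3) an infinite cardinal λ is a caliber for X if and only if cf(λ) > ω. -/

import Mathlib

open Cardinal Set

universe u

/-- `κ` is a caliber for `X`: every κ-indexed family of non-empty open sets
(repetitions allowed) has a κ-sized subfamily with non-empty intersection. -/
def IsCaliber (X : Type u) [TopologicalSpace X] (κ : Cardinal.{u}) : Prop :=
  ∀ {ι : Type u} (U : ι → Set X), #ι = κ → (∀ i, IsOpen (U i)) → (∀ i, (U i).Nonempty) →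
    ∃ J : Set ι, #J = κ ∧ (⋂ i ∈ J, U i).Nonempty

/-- `κ` is a precaliber for `X`: every κ-indexed family of non-empty open sets
has a κ-sized subfamily which is centered. -/
def IsPrecaliber (X : Type u) [TopologicalSpace X] (κ : Cardinal.{u}) : Prop :=
  ∀ {ι : Type u} (U : ι → Set X), #ι = κ → (∀ i, IsOpen (U i)) → (∀ i, (U i).Nonempty) →
    ∃ J : Set ι, #J = κ ∧
      ∀ s : Finset ι, ↑s ⊆ J → s.Nonempty → (⋂ i ∈ s, U i).Nonempty

/-- `κ` is a weak precaliber for `X`: every κ-indexed family of non-empty open sets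
has a κ-sized subfamily which is linked. -/
def IsWeakPrecaliber (X : Type u) [TopologicalSpace X] (κ : Cardinal.{u}) : Prop :=
  ∀ {ι : Type u} (U : ι → Set X), #ι = κ → (∀ i, IsOpen (U i)) → (∀ i, (U i).Nonempty) →
    ∃ J : Set ι, #J = κ ∧ ∀ i ∈ J, ∀ j ∈ J, (U i ∩ U j).Nonempty

/-- `κ` is a caliber* for `X`: every family of non-empty open sets of cardinality `κ`
has a subfamily of cardinality `κ` with non-empty intersection. -/
def IsCaliberStar (X : Type u) [TopologicalSpace X] (κ : Cardinal.{u}) : Prop :=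
  ∀ 𝒰 : Set (Set X), #𝒰 = κ → (∀ U ∈ 𝒰, IsOpen U) → (∀ U ∈ 𝒰, U.Nonempty) →
    ∃ 𝒱 ⊆ 𝒰, #𝒱 = κ ∧ (⋂₀ 𝒱).Nonempty

/-- `κ` is a precaliber* for `X`: every family of non-empty open sets of cardinality `κ`
has a centered subfamily of cardinality `κ`. -/
def IsPrecaliberStar (X : Type u) [TopologicalSpace X] (κ : Cardinal.{u}) : Prop :=
  ∀ 𝒰 : Set (Set X), #𝒰 = κ → (∀ U ∈ 𝒰, IsOpen U) → (∀ U ∈ 𝒰, U.Nonempty) →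
    ∃ 𝒱 ⊆ 𝒰, #𝒱 = κ ∧
      ∀ s : Finset (Set X), ↑s ⊆ 𝒱 → s.Nonempty → (⋂₀ (↑s : Set (Set X))).Nonempty

/-- `κ` is a weak precaliber* for `X`: every family of non-empty open sets of
cardinality `κ` has a linked subfamily of cardinality `κ`. -/
def IsWeakPrecaliberStar (X : Type u) [TopologicalSpace X] (κ : Cardinal.{u}) : Prop :=
  ∀ 𝒰 : Set (Set X), #𝒰 = κ → (∀ U ∈ 𝒰, IsOpen U) → (∀ U ∈ 𝒰, U.Nonempty) →
    ∃ 𝒱 ⊆ 𝒰, #𝒱 = κ ∧ ∀ U ∈ 𝒱, ∀ V ∈ 𝒱, (U ∩ V).Nonempty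

/-- `o X` : the number of open subsets of `X`. -/
def oCard (X : Type u) [TopologicalSpace X] : Cardinal.{u} :=
  #{U : Set X | IsOpen U}

/-- A cellular family: a pairwise disjoint collection of non-empty open sets. -/
def IsCellularFamily (X : Type u) [TopologicalSpace X] (𝒰 : Set (Set X)) : Prop :=
  (∀ U ∈ 𝒰, IsOpen U) ∧ (∀ U ∈ 𝒰, U.Nonempty) ∧ 𝒰.Pairwise Disjoint

section Aux

noncomputable section

local notation "XX" => CofiniteTopology ℕ

instance auxInf : Infinite (CofiniteTopology ℕ) :=
  CofiniteTopology.of.infinite_iff.mp inferInstance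
instance auxCnt : Countable (CofiniteTopology ℕ) :=
  (CofiniteTopology.of (X := ℕ)).symm.injective.countable

lemma aux_nonempty_of_compl_finite {s : Set XX} (h : sᶜ.Finite) : s.Nonempty := by
  have := h.infinite_compl
  rw [compl_compl] at this
  exact this.nonempty

lemma aux_compl_fin {s : Set XX} (ho : IsOpen s) (hne : s.Nonempty) : sᶜ.Finite :=
  CofiniteTopology.isOpen_iff.mp ho hne

lemma aux_finset_inter {ι : Type*} (U : ι → Set XX) (ho : ∀ i, IsOpen (U i))
    (hne : ∀ i, (U i).Nonempty) (s : Finset ι) : (⋂ i ∈ s, U i).Nonempty := by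
  apply aux_nonempty_of_compl_finite
  rw [compl_iInter₂]
  exact s.finite_toSet.biUnion fun i _ => aux_compl_fin (ho i) (hne i)

lemma aux_sInter {𝒱 : Set (Set XX)} (hfin : 𝒱.Finite) (ho : ∀ U ∈ 𝒱, IsOpen U)
    (hne : ∀ U ∈ 𝒱, U.Nonempty) : (⋂₀ 𝒱).Nonempty := by
  apply aux_nonempty_of_compl_finite
  rw [compl_sInter]
  exact (hfin.image compl).sUnion fun t ht => by
    obtain ⟨U, hU, rfl⟩ := ht
    exact aux_compl_fin (ho U hU) (hne U hU)

lemma aux_card_le (𝒰 : Set (Set XX)) (ho : ∀ U ∈ 𝒰, IsOpen U) (hne : ∀ U ∈ 𝒰, U.Nonempty) :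
    Cardinal.mk 𝒰 ≤ ℵ₀ := by
  rw [mk_le_aleph0_iff, countable_coe_iff]
  have h1 : (compl '' 𝒰).Countable :=
    Set.Countable.setOf_finite.mono (by
      rintro t ⟨U, hU, rfl⟩
      exact aux_compl_fin (ho U hU) (hne U hU))
  have := h1.image compl
  rwa [Set.image_image, funext (g := id) compl_compl, Set.image_id] at this

/-- the basic open sets `{x : n ≤ x}` -/
def auxS (n : ℕ) : Set XX := {x | n ≤ CofiniteTopology.of.symm x}

lemma auxS_open (n : ℕ) : IsOpen (auxS n) := by
  rw [CofiniteTopology.isOpen_iff]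
  intro _
  have : (auxS n)ᶜ = CofiniteTopology.of.symm ⁻¹' (Set.Iio n) := by
    ext x; simp [auxS, Set.mem_Iio, not_le]
  rw [this]
  exact (Set.finite_Iio n).preimage (Equiv.injective _).injOn

lemma auxS_mem_self (n : ℕ) : CofiniteTopology.of n ∈ auxS n := by
  simp [auxS]

lemma auxS_nonempty (n : ℕ) : (auxS n).Nonempty := ⟨_, auxS_mem_self n⟩

lemma auxS_inj : Function.Injective auxS := by
  intro n m h
  have h1 := auxS_mem_self n
  have h2 := auxS_mem_self m
  rw [h] at h1; rw [← h] at h2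
  simp only [auxS, mem_setOf_eq, Equiv.symm_apply_apply] at h1 h2
  omega

lemma aux_not_calstar_aleph0 :
    ∃ 𝒰 : Set (Set XX), #𝒰 = ℵ₀ ∧ (∀ U ∈ 𝒰, IsOpen U) ∧ (∀ U ∈ 𝒰, U.Nonempty) ∧
      ∀ 𝒱 ⊆ 𝒰, #𝒱 = ℵ₀ → ¬ (⋂₀ 𝒱).Nonempty := by
  refine ⟨Set.range auxS, by rw [mk_range_eq _ auxS_inj, mk_nat], ?_, ?_, ?_⟩
  · rintro U ⟨n, rfl⟩; exact auxS_open n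
  · rintro U ⟨n, rfl⟩; exact auxS_nonempty n
  · rintro 𝒱 hsub hcard ⟨x, hx⟩
    have hfin : 𝒱.Finite := by
      apply ((Set.finite_Iic (CofiniteTopology.of.symm x)).image auxS).subset
      intro V hV
      obtain ⟨n, rfl⟩ := hsub hV
      exact ⟨n, hx _ hV, rfl⟩
    exact hfin.lt_aleph0.ne hcard

lemma aux_caliber_of_cof (lam : Cardinal.{0}) (h : ℵ₀ < lam.ord.cof) :
    IsCaliber XX lam := by
  intro ι U hcard hopen hne
  have hlam : ℵ₀ < lam := h.trans_le (Ordinal.cof_ord_le lam)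
  set J : ℕ → Set ι := fun n => {i | CofiniteTopology.of n ∈ U i} with hJ
  have hcov : ⋃ n, J n = Set.univ := by
    ext i
    simp only [Set.mem_iUnion, Set.mem_univ, iff_true]
    obtain ⟨x, hx⟩ := hne i
    exact ⟨CofiniteTopology.of.symm x, by simpa [hJ] using hx⟩
  by_cases hex : ∃ n, #(J n) = lam
  · obtain ⟨n, hn⟩ := hex
    exact ⟨J n, hn, ⟨CofiniteTopology.of n, Set.mem_iInter₂.2 fun i hi => hi⟩⟩
  · push_neg at hex
    have hlt : ∀ n, #(J n) < lam := fun n =>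
      ((mk_set_le _).trans_eq hcard).lt_of_ne (hex n)
    have hsup : ⨆ n, #(J n) < lam := Ordinal.iSup_lt (by rwa [mk_nat]) hlt
    have hle : lam ≤ ℵ₀ * ⨆ n, #(J n) := by
      calc lam = #ι := hcard.symm
        _ = #(⋃ n, J n) := by rw [hcov, mk_univ]
        _ ≤ #ℕ * ⨆ n, #(J n) := mk_iUnion_le J
        _ = ℵ₀ * ⨆ n, #(J n) := by rw [mk_nat]
    exact absurd (hle.trans_lt (mul_lt_of_lt hlam.le hlam hsup)) (lt_irrefl _)

lemma aux_not_caliber (lam : Cardinal.{0}) (hlam : ℵ₀ ≤ lam) (h : lam.ord.cof ≤ ℵ₀) :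
    ¬ IsCaliber XX lam := by
  intro hcal
  obtain ⟨S, hSub, hScard⟩ :=
    Order.exists_cof_eq lam.ord.ToType
  rw [Ordinal.cof_toType] at hScard
  have hSle : #S ≤ ℵ₀ := hScard ▸ h
  rw [mk_le_aleph0_iff, countable_coe_iff] at hSle
  have hSne : S.Nonempty := by
    have hne0 : lam.ord ≠ 0 := by
      have h0 : (0 : Cardinal).ord < lam.ord := ord_lt_ord.mpr (aleph0_pos.trans_le hlam)
      rw [ord_zero] at h0
      exact h0.ne'
    have : Nonempty lam.ord.ToType := Ordinal.toType_nonempty_iff_ne_zero.mpr hne0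
    obtain ⟨a⟩ := this
    obtain ⟨b, hb, _⟩ := hSub a
    exact ⟨b, hb⟩
  obtain ⟨g, hgS⟩ := hSle.exists_eq_range hSne
  have hex : ∀ i : lam.ord.ToType, ∃ n, i ≤ g n := by
    intro i
    obtain ⟨b, hb, hnb⟩ := hSub i
    rw [hgS] at hb
    obtain ⟨n, rfl⟩ := hb
    exact ⟨n, hnb⟩
  set f : lam.ord.ToType → ℕ := fun i => sInf {n | i ≤ g n} with hfdef
  have hf : ∀ i, i ≤ g (f i) := fun i => Nat.sInf_mem (hex i)
  obtain ⟨J, hJcard, x, hx⟩ := hcal (fun i => auxS (f i))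
    (by rw [Cardinal.mk_toType, card_ord]) (fun i => auxS_open _) (fun i => auxS_nonempty _)
  set m := CofiniteTopology.of.symm x with hm
  set b := (Finset.range (m + 1)).sup' Finset.nonempty_range_add_one g with hb
  have hJsub : J ⊆ Set.Iic b := by
    intro i hi
    have hxi : x ∈ auxS (f i) := Set.mem_iInter₂.mp hx i hi
    have hfi : f i ≤ m := hxi
    calc i ≤ g (f i) := hf i
      _ ≤ b := Finset.le_sup' g (Finset.mem_range.mpr (by omega))
  have hlow : lam ≤ #(Set.Iic b) :=
    le_trans (le_of_eq hJcard.symm) (mk_le_mk_of_subset hJsub)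
  have hIic : #(Set.Iic b) < lam := by
    rw [← Set.Iio_insert]
    exact (mk_insert_le ..).trans_lt
      (add_lt_of_lt hlam (Cardinal.mk_Iio_ord_toType b) (one_lt_aleph0.trans_le hlam))
  exact absurd (hlow.trans_lt hIic) (lt_irrefl _)

end
end Aux

theorem stmt11 :
    (∀ κ : Cardinal.{0}, ℵ₀ ≤ κ →
      IsPrecaliber (CofiniteTopology ℕ) κ ∧ IsPrecaliberStar (CofiniteTopology ℕ) κ ∧
      IsWeakPrecaliber (CofiniteTopology ℕ) κ ∧ IsWeakPrecaliberStar (CofiniteTopology ℕ) κ) ∧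
    (∀ lam : Cardinal.{0}, ℵ₀ ≤ lam → (IsCaliberStar (CofiniteTopology ℕ) lam ↔ ℵ₀ < lam)) ∧
    (∀ lam : Cardinal.{0}, ℵ₀ ≤ lam → (IsCaliber (CofiniteTopology ℕ) lam ↔ ℵ₀ < lam.ord.cof)) := by
  refine ⟨fun κ hκ => ⟨?_, ?_, ?_, ?_⟩, fun lam hlam => ⟨?_, ?_⟩, fun lam hlam => ⟨?_, ?_⟩⟩
  · intro ι U hcard hopen hne
    exact ⟨Set.univ, by rw [mk_univ, hcard], fun s _ _ => aux_finset_inter U hopen hne s⟩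
  · intro 𝒰 hcard hopen hne
    refine ⟨𝒰, subset_rfl, hcard, fun s hs _ => ?_⟩
    exact aux_sInter s.finite_toSet (fun V hV => hopen V (hs hV)) (fun V hV => hne V (hs hV))
  · intro ι U hcard hopen hne
    refine ⟨Set.univ, by rw [mk_univ, hcard], fun i _ j _ => ?_⟩
    apply aux_nonempty_of_compl_finite
    rw [Set.compl_inter]
    exact (aux_compl_fin (hopen i) (hne i)).union (aux_compl_fin (hopen j) (hne j))
  · intro 𝒰 hcard hopen hne
    refine ⟨𝒰, subset_rfl, hcard, fun V hV W hW => ?_⟩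
    apply aux_nonempty_of_compl_finite
    rw [Set.compl_inter]
    exact (aux_compl_fin (hopen V hV) (hne V hV)).union (aux_compl_fin (hopen W hW) (hne W hW))
  · intro hcs
    by_contra hnot
    have heq : lam = ℵ₀ := le_antisymm (not_lt.mp hnot) hlam
    subst heq
    obtain ⟨𝒰, hc, ho, hn, hbad⟩ := aux_not_calstar_aleph0
    obtain ⟨𝒱, h1, h2, h3⟩ := hcs 𝒰 hc ho hn
    exact hbad 𝒱 h1 h2 h3
  · intro hlt 𝒰 hcard hopen hne
    exact absurd (hcard ▸ aux_card_le 𝒰 hopen hne) (not_le.mpr hlt)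
  · intro hcal
    by_contra hnot
    exact aux_not_caliber lam hlam (not_lt.mp hnot) hcal
  · exact aux_caliber_of_cof lam
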